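/- Let ω, n > 0 with ω/n irrational, let I₀ be a finite set of nonzero integers, B : I₀ → ℝ, and let γ, μ, A₃, C₀ ∈ ℝ and Φ : ℝ → ℝ be continuous. Then lim_{T→+∞} (1/T) ∫₀ᵀ cos(ωτ) [ 2 Σ_{i∈I₀} B_i sin(i n τ − C₀ sin(ωτ)) − 2γ Φ(C₀ ω cos(ωτ)) − μ C₀ sin(ωτ) + (A₃/3) C₀³ sin³(ωτ) ] dτ = −(γ/π) ∫₀^{2π} cos(ψ) Φ(C₀ ω cos ψ) dψ. -/

import Mathlib

open Filter intervalIntegral Real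



lemma aux_tendsto_of_dev (F : ℝ → ℝ) (L M : ℝ)
    (h : ∀ T : ℝ, 1 ≤ T → |F T - L * T| ≤ M) :
    Tendsto (fun T : ℝ => (1 / T) * F T) atTop (nhds L) := by
  have h0 : Tendsto (fun T : ℝ => M / T) atTop (nhds 0) :=
    tendsto_const_nhds.div_atTop tendsto_id
  have key : Tendsto (fun T : ℝ => (1 / T) * F T - L) atTop (nhds 0) := by
    apply squeeze_zero_norm' _ h0
    filter_upwards [eventually_ge_atTop (1:ℝ)] with T hT
    have hT0 : (0:ℝ) < T := lt_of_lt_of_le one_pos hT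
    have heq : (1 / T) * F T - L = (F T - L * T) / T := by
      field_simp
    rw [Real.norm_eq_abs, heq, abs_div, abs_of_pos hT0]
    exact div_le_div_of_nonneg_right (h T hT) hT0.le
  have := key.add_const L
  simpa using this


lemma aux_geom_bound (α : ℝ) (hα : Complex.exp (α * Complex.I) ≠ 1) (N : ℕ) :
    |∑ j ∈ Finset.range N, Real.cos (j * α)| ≤ 2 / ‖Complex.exp (α * Complex.I) - 1‖ ∧
    |∑ j ∈ Finset.range N, Real.sin (j * α)| ≤ 2 / ‖Complex.exp (α * Complex.I) - 1‖ := by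
  set z : ℂ := Complex.exp (α * Complex.I) with hz
  have hz1 : (0:ℝ) < ‖z - 1‖ := by
    rw [norm_pos_iff]
    exact sub_ne_zero.mpr hα
  have hpow : ∀ j : ℕ, z ^ j = Complex.exp ((j * α : ℝ) * Complex.I) := by
    intro j
    rw [hz, ← Complex.exp_nat_mul]
    push_cast
    ring_nf
  have hzsum : ‖∑ j ∈ Finset.range N, z ^ j‖ ≤ 2 / ‖z - 1‖ := by
    rw [geom_sum_eq hα N, norm_div]
    gcongr
    calc ‖z ^ N - 1‖ ≤ ‖z ^ N‖ + ‖(1:ℂ)‖ := norm_sub_le _ _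
    _ ≤ 2 := by
        rw [norm_pow, hz, Complex.norm_exp_ofReal_mul_I]
        norm_num
  have hre : (∑ j ∈ Finset.range N, z ^ j).re = ∑ j ∈ Finset.range N, Real.cos (j * α) := by
    rw [Complex.re_sum]
    refine Finset.sum_congr rfl fun j _ => ?_
    rw [hpow j, Complex.exp_ofReal_mul_I_re]
  have him : (∑ j ∈ Finset.range N, z ^ j).im = ∑ j ∈ Finset.range N, Real.sin (j * α) := by
    rw [Complex.im_sum]
    refine Finset.sum_congr rfl fun j _ => ?_
    rw [hpow j, Complex.exp_ofReal_mul_I_im]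
  constructor
  · rw [← hre]
    exact le_trans (Complex.abs_re_le_norm _) hzsum
  · rw [← him]
    exact le_trans (Complex.abs_im_le_norm _) hzsum


lemma aux_osc_bound (ω m C₀ : ℝ) (hω : 0 < ω) (hirr : Irrational (m / ω)) :
    ∃ M : ℝ, ∀ T : ℝ, 0 ≤ T →
      |∫ τ in (0:ℝ)..T, Real.cos (ω * τ) * Real.sin (m * τ - C₀ * Real.sin (ω * τ))| ≤ M := by
  have hπ := Real.pi_pos
  set P : ℝ := 2 * π / ω with hPdef
  have hP : 0 < P := by positivity
  have hωP : ω * P = 2 * π := by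
    rw [hPdef]; field_simp
  set α : ℝ := m * P with hαdef
  set φ : ℝ → ℝ := fun τ => Real.cos (ω * τ) * Real.sin (m * τ - C₀ * Real.sin (ω * τ)) with hφdef
  have hφc : Continuous φ := by fun_prop
  have h_int : ∀ t₁ t₂ : ℝ, IntervalIntegrable φ MeasureTheory.volume t₁ t₂ :=
    fun t₁ t₂ => hφc.intervalIntegrable t₁ t₂
  -- z ≠ 1
  have hz : Complex.exp (α * Complex.I) ≠ 1 := by
    intro h
    rw [Complex.exp_eq_one_iff] at h
    obtain ⟨k, hk⟩ := h
    have hk' : (α : ℂ) * Complex.I = ((k : ℂ) * (2 * π)) * Complex.I := by rw [hk]; ring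
    have hc : (α : ℂ) = (k : ℂ) * (2 * π) := mul_right_cancel₀ Complex.I_ne_zero hk'
    have hαr : α = (k : ℝ) * (2 * π) := by exact_mod_cast hc
    have : m / ω = (k : ℝ) := by
      rw [hαdef, hPdef] at hαr
      field_simp at hαr ⊢
      nlinarith [hαr]
    exact hirr.ne_int k (by exact_mod_cast this)
  set K : ℝ := 2 / ‖Complex.exp (α * Complex.I) - 1‖ with hKdef
  have hK0 : 0 ≤ K := by positivity
  set C : ℝ := ∫ s in (0:ℝ)..P, Real.cos (ω * s) * Real.sin (m * s - C₀ * Real.sin (ω * s)) with hCdef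
  set S : ℝ := ∫ s in (0:ℝ)..P, Real.cos (ω * s) * Real.cos (m * s - C₀ * Real.sin (ω * s)) with hSdef
  have bound1 : ∀ (u v : ℝ → ℝ) (hb : ∀ x, |u x| ≤ 1 ∧ |v x| ≤ 1),
      |∫ s in (0:ℝ)..P, u s * v s| ≤ P := by
    intro u v hb
    have := intervalIntegral.norm_integral_le_of_norm_le_const (C := 1)
      (f := fun s => u s * v s) (a := (0:ℝ)) (b := P) (fun x _ => by
        rw [Real.norm_eq_abs, abs_mul]
        calc |u x| * |v x| ≤ 1 * 1 := mul_le_mul (hb x).1 (hb x).2 (abs_nonneg _) zero_le_one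
        _ = 1 := one_mul 1)
    rw [Real.norm_eq_abs] at this
    calc |∫ s in (0:ℝ)..P, u s * v s| ≤ 1 * |P - 0| := this
    _ = P := by rw [sub_zero, abs_of_pos hP, one_mul]
  have hC : |C| ≤ P := bound1 _ _ (fun x => ⟨Real.abs_cos_le_one _, Real.abs_sin_le_one _⟩)
  have hS : |S| ≤ P := bound1 _ _ (fun x => ⟨Real.abs_cos_le_one _, Real.abs_cos_le_one _⟩)
  -- one-period integral
  have key : ∀ k : ℕ, (∫ τ in ((k:ℝ) * P)..(((k:ℝ) + 1) * P), φ τ)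
      = Real.cos (k * α) * C + Real.sin (k * α) * S := by
    intro k
    have h1 : (∫ s in (0:ℝ)..P, φ (s + (k:ℝ) * P)) = ∫ τ in ((k:ℝ) * P)..(((k:ℝ) + 1) * P), φ τ := by
      rw [intervalIntegral.integral_comp_add_right]
      congr 1 <;> ring
    rw [← h1]
    have hpt : ∀ s : ℝ, φ (s + (k:ℝ) * P)
        = Real.cos ((k:ℝ) * α) * (Real.cos (ω * s) * Real.sin (m * s - C₀ * Real.sin (ω * s)))
          + Real.sin ((k:ℝ) * α) * (Real.cos (ω * s) * Real.cos (m * s - C₀ * Real.sin (ω * s))) := by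
      intro s
      have e1 : ω * (s + (k:ℝ) * P) = ω * s + ((k:ℤ):ℝ) * (2 * π) := by
        push_cast; nlinarith [hωP]
      have ecos : Real.cos (ω * (s + (k:ℝ) * P)) = Real.cos (ω * s) := by
        rw [e1, Real.cos_add_int_mul_two_pi]
      have esin : Real.sin (ω * (s + (k:ℝ) * P)) = Real.sin (ω * s) := by
        rw [e1, Real.sin_add_int_mul_two_pi]
      have e2 : m * (s + (k:ℝ) * P) - C₀ * Real.sin (ω * (s + (k:ℝ) * P))
          = (m * s - C₀ * Real.sin (ω * s)) + (k:ℝ) * α := by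
        rw [esin, hαdef]; ring
      rw [hφdef]
      simp only []
      rw [ecos, e2, Real.sin_add]
      ring
    rw [intervalIntegral.integral_congr (g := fun s =>
        Real.cos ((k:ℝ) * α) * (Real.cos (ω * s) * Real.sin (m * s - C₀ * Real.sin (ω * s)))
          + Real.sin ((k:ℝ) * α) * (Real.cos (ω * s) * Real.cos (m * s - C₀ * Real.sin (ω * s))))
      (fun s _ => hpt s)]
    have hc1 : Continuous fun s : ℝ => Real.cos ((k:ℝ)*α) * (Real.cos (ω*s) * Real.sin (m*s - C₀*Real.sin (ω*s))) := by fun_prop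
    have hc2 : Continuous fun s : ℝ => Real.sin ((k:ℝ)*α) * (Real.cos (ω*s) * Real.cos (m*s - C₀*Real.sin (ω*s))) := by fun_prop
    rw [intervalIntegral.integral_add (hc1.intervalIntegrable _ _) (hc2.intervalIntegrable _ _),
      intervalIntegral.integral_const_mul, intervalIntegral.integral_const_mul]
  refine ⟨K * P + K * P + P, fun T hT => ?_⟩
  set N : ℕ := ⌊T / P⌋.toNat with hNdef
  have hfl : (0:ℤ) ≤ ⌊T / P⌋ := Int.floor_nonneg.mpr (by positivity)
  have hNr : ((N:ℤ):ℝ) = ((⌊T / P⌋ : ℤ):ℝ) := by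
    rw [hNdef]; norm_cast; exact Int.toNat_of_nonneg hfl
  have hNT : (N:ℝ) * P ≤ T := by
    have h := Int.floor_le (T / P)
    have : (N:ℝ) ≤ T / P := by rw [show ((N:ℝ)) = ((⌊T/P⌋:ℤ):ℝ) from hNr]; exact h
    calc (N:ℝ) * P ≤ (T / P) * P := by nlinarith
    _ = T := by field_simp
  have hTN : T ≤ ((N:ℝ) + 1) * P := by
    have h := (Int.lt_floor_add_one (T / P)).le
    have : T / P ≤ (N:ℝ) + 1 := by rw [show ((N:ℝ)) = ((⌊T/P⌋:ℤ):ℝ) from hNr]; exact_mod_cast h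
    calc T = (T / P) * P := by field_simp
    _ ≤ ((N:ℝ) + 1) * P := by nlinarith
  have hsplit : (∫ τ in (0:ℝ)..T, φ τ)
      = (∫ τ in (0:ℝ)..((N:ℝ) * P), φ τ) + ∫ τ in ((N:ℝ) * P)..T, φ τ :=
    (intervalIntegral.integral_add_adjacent_intervals (h_int _ _) (h_int _ _)).symm
  have hhead : (∫ τ in (0:ℝ)..((N:ℝ) * P), φ τ)
      = (∑ k ∈ Finset.range N, Real.cos (k * α)) * C + (∑ k ∈ Finset.range N, Real.sin (k * α)) * S := by
    have hsum := intervalIntegral.sum_integral_adjacent_intervals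
      (a := fun j : ℕ => (j:ℝ) * P) (n := N) (fun k _ => h_int _ _)
    simp only [Nat.cast_zero, zero_mul] at hsum
    rw [← hsum]
    have : ∀ k ∈ Finset.range N, (∫ τ in ((k:ℝ) * P)..(((k:ℕ)+1:ℕ):ℝ) * P, φ τ)
        = Real.cos (k * α) * C + Real.sin (k * α) * S := by
      intro k _
      have := key k
      convert this using 2
      push_cast; ring
    rw [Finset.sum_congr rfl this, Finset.sum_add_distrib, ← Finset.sum_mul, ← Finset.sum_mul]
  have hgeo := aux_geom_bound α hz N
  have hheadb : |∫ τ in (0:ℝ)..((N:ℝ) * P), φ τ| ≤ K * P + K * P := by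
    rw [hhead]
    calc |(∑ k ∈ Finset.range N, Real.cos (k * α)) * C + (∑ k ∈ Finset.range N, Real.sin (k * α)) * S|
        ≤ |(∑ k ∈ Finset.range N, Real.cos (k * α)) * C| + |(∑ k ∈ Finset.range N, Real.sin (k * α)) * S| :=
          abs_add_le _ _
      _ ≤ K * P + K * P := by
          rw [abs_mul, abs_mul]
          exact add_le_add
            (mul_le_mul hgeo.1 hC (abs_nonneg _) hK0)
            (mul_le_mul hgeo.2 hS (abs_nonneg _) hK0)
  have htailb : |∫ τ in ((N:ℝ) * P)..T, φ τ| ≤ P := by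
    have := intervalIntegral.norm_integral_le_of_norm_le_const (C := 1)
      (f := φ) (a := (N:ℝ) * P) (b := T) (fun x _ => by
        rw [Real.norm_eq_abs, hφdef]
        simp only []
        rw [abs_mul]
        calc |Real.cos (ω*x)| * |Real.sin (m*x - C₀*Real.sin (ω*x))| ≤ 1 * 1 :=
          mul_le_mul (Real.abs_cos_le_one _) (Real.abs_sin_le_one _) (abs_nonneg _) zero_le_one
        _ = 1 := one_mul 1)
    rw [Real.norm_eq_abs] at this
    calc |∫ τ in ((N:ℝ) * P)..T, φ τ| ≤ 1 * |T - (N:ℝ) * P| := this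
    _ ≤ P := by
        rw [one_mul, abs_of_nonneg (by linarith)]
        nlinarith
  calc |∫ τ in (0:ℝ)..T, φ τ|
      ≤ |∫ τ in (0:ℝ)..((N:ℝ) * P), φ τ| + |∫ τ in ((N:ℝ) * P)..T, φ τ| := by
        rw [hsplit]; exact abs_add_le _ _
    _ ≤ (K * P + K * P) + P := add_le_add hheadb htailb
    _ = K * P + K * P + P := by ring


lemma aux_periodic_dev (g : ℝ → ℝ) (hg : Continuous g) (P : ℝ) (hP : 0 < P)
    (hper : Function.Periodic g P) :
    ∃ M : ℝ, ∀ T : ℝ, |(∫ τ in (0:ℝ)..T, g τ) - ((∫ τ in (0:ℝ)..P, g τ) / P) * T| ≤ M := by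
  have h_int : ∀ t₁ t₂ : ℝ, IntervalIntegrable g MeasureTheory.volume t₁ t₂ :=
    fun t₁ t₂ => hg.intervalIntegrable t₁ t₂
  set a : ℝ := ∫ τ in (0:ℝ)..P, g τ with ha
  set sI : ℝ := sInf ((fun t => ∫ x in (0:ℝ)..t, g x) '' Set.Icc 0 P)
  set sS : ℝ := sSup ((fun t => ∫ x in (0:ℝ)..t, g x) '' Set.Icc 0 P)
  refine ⟨max |sI| |sS| + |a|, fun T => ?_⟩
  have h1 := hper.sInf_add_zsmul_le_integral_of_pos (h_int 0 P) hP T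
  have h2 := hper.integral_le_sSup_add_zsmul_of_pos (h_int 0 P) hP T
  rw [zsmul_eq_mul] at h1 h2
  have key : |(∫ x in (0:ℝ)..T, g x) - (⌊T / P⌋ : ℝ) * a| ≤ max |sI| |sS| := by
    rw [abs_le]
    constructor
    · have : -|sI| ≤ sI := neg_abs_le sI
      nlinarith [le_max_left |sI| |sS|]
    · have : sS ≤ |sS| := le_abs_self sS
      nlinarith [le_max_right |sI| |sS|]
  have key2 : |(⌊T / P⌋ : ℝ) * a - (a / P) * T| ≤ |a| := by
    have hfr : (⌊T / P⌋ : ℝ) * a - (a / P) * T = -(Int.fract (T / P)) * a := by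
      rw [Int.fract]
      field_simp
      ring
    rw [hfr, abs_mul, abs_neg]
    have h01 : |Int.fract (T / P)| ≤ 1 :=
      abs_le.mpr ⟨by linarith [Int.fract_nonneg (T / P)], (Int.fract_lt_one (T / P)).le⟩
    nlinarith [abs_nonneg a, abs_nonneg (Int.fract (T/P))]
  calc |(∫ τ in (0:ℝ)..T, g τ) - (a / P) * T|
      ≤ |(∫ x in (0:ℝ)..T, g x) - (⌊T / P⌋ : ℝ) * a| + |(⌊T / P⌋ : ℝ) * a - (a / P) * T| := by
        have := abs_sub_le ((∫ x in (0:ℝ)..T, g x)) ((⌊T / P⌋ : ℝ) * a) ((a / P) * T)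
        exact this
    _ ≤ max |sI| |sS| + |a| := add_le_add key key2


lemma aux_finset_bound {ι : Type*} [DecidableEq ι] (s : Finset ι) (u : ι → ℝ → ℝ)
    (h : ∀ i ∈ s, ∃ M : ℝ, ∀ T : ℝ, 0 ≤ T → |u i T| ≤ M) :
    ∃ M : ℝ, ∀ T : ℝ, 0 ≤ T → |∑ i ∈ s, u i T| ≤ M := by
  classical
  induction s using Finset.induction_on with
  | empty => exact ⟨0, fun T _ => by simp⟩
  | insert a s' hnot ih =>
    obtain ⟨M₁, hM₁⟩ := h a (Finset.mem_insert_self a s')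
    obtain ⟨M₂, hM₂⟩ := ih (fun i hi => h i (Finset.mem_insert_of_mem hi))
    refine ⟨M₁ + M₂, fun T hT => ?_⟩
    rw [Finset.sum_insert hnot]
    exact le_trans (abs_add_le _ _) (add_le_add (hM₁ T hT) (hM₂ T hT))


/-- Equation (5.14a): the linear growth rate `I_{1,c}` of `M_{1,c}(T)` in the first step
of the iteration for the quasi-periodic attractor near the 3:2 resonance. -/
theorem growth_rate_M1c
    (ω n : ℝ) (hω : 0 < ω) (hn : 0 < n) (hirr : Irrational (ω / n))
    (I₀ : Finset ℤ) (hI₀ : ∀ i ∈ I₀, i ≠ 0) (B : ℤ → ℝ)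
    (γ μ A₃ C₀ : ℝ) (Φ : ℝ → ℝ) (hΦ : Continuous Φ) :
    Tendsto (fun T : ℝ => (1 / T) * ∫ τ in (0:ℝ)..T,
        Real.cos (ω * τ) *
          (2 * ∑ i ∈ I₀, B i * Real.sin ((i : ℝ) * n * τ - C₀ * Real.sin (ω * τ))
            - 2 * γ * Φ (C₀ * ω * Real.cos (ω * τ))
            - μ * C₀ * Real.sin (ω * τ)
            + (A₃ / 3) * C₀ ^ 3 * (Real.sin (ω * τ)) ^ 3)) atTop
      (nhds (-(γ / Real.pi) *
        ∫ ψ in (0:ℝ)..(2 * Real.pi), Real.cos ψ * Φ (C₀ * ω * Real.cos ψ))) := by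
  have hπ := Real.pi_pos
  set P : ℝ := 2 * π / ω with hPdef
  have hP : 0 < P := by positivity
  have hωP : ω * P = 2 * π := by rw [hPdef]; field_simp
  set J : ℝ := ∫ ψ in (0:ℝ)..(2 * π), Real.cos ψ * Φ (C₀ * ω * Real.cos ψ) with hJdef
  set L : ℝ := -(γ / π) * J with hLdef
  set G : ℝ → ℝ := fun ψ => Real.cos ψ *
    (-(2 * γ * Φ (C₀ * ω * Real.cos ψ)) - μ * C₀ * Real.sin ψ
      + (A₃ / 3) * C₀ ^ 3 * (Real.sin ψ) ^ 3) with hGdef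
  have hGc : Continuous G := by
    apply Real.continuous_cos.mul
    exact ((continuous_const.mul (hΦ.comp (continuous_const.mul Real.continuous_cos))).neg.sub
      (continuous_const.mul Real.continuous_sin)).add
      (continuous_const.mul (Real.continuous_sin.pow 3))
  set g : ℝ → ℝ := fun τ => G (ω * τ) with hgdef
  have hgc : Continuous g := hGc.comp (continuous_const.mul continuous_id)
  have hper : Function.Periodic g P := by
    intro τ
    have h1 : ω * (τ + P) = ω * τ + 2 * π := by rw [mul_add, hωP]
    rw [hgdef]
    simp only [h1, hGdef, Real.cos_add_two_pi, Real.sin_add_two_pi]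
  -- value of the period integral
  have hGint : (∫ ψ in (0:ℝ)..(2 * π), G ψ) = -(2 * γ) * J := by
    have hpt : ∀ ψ : ℝ, G ψ = (-(2 * γ)) * (Real.cos ψ * Φ (C₀ * ω * Real.cos ψ))
        + ((-(μ * C₀)) * (Real.sin ψ * Real.cos ψ)
          + ((A₃ / 3) * C₀ ^ 3) * (Real.sin ψ ^ 3 * Real.cos ψ)) := by
      intro ψ; rw [hGdef]; ring
    rw [intervalIntegral.integral_congr (fun ψ _ => hpt ψ)]
    have hc1 : Continuous fun ψ : ℝ => (-(2 * γ)) * (Real.cos ψ * Φ (C₀ * ω * Real.cos ψ)) := by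
      exact continuous_const.mul (Real.continuous_cos.mul
        (hΦ.comp (continuous_const.mul Real.continuous_cos)))
    have hc2 : Continuous fun ψ : ℝ => (-(μ * C₀)) * (Real.sin ψ * Real.cos ψ) := by
      exact continuous_const.mul (Real.continuous_sin.mul Real.continuous_cos)
    have hc3 : Continuous fun ψ : ℝ => ((A₃ / 3) * C₀ ^ 3) * (Real.sin ψ ^ 3 * Real.cos ψ) := by
      exact continuous_const.mul ((Real.continuous_sin.pow 3).mul Real.continuous_cos)
    rw [intervalIntegral.integral_add (hc1.intervalIntegrable _ _)
        (by exact (hc2.add hc3).intervalIntegrable _ _ : IntervalIntegrable (fun ψ => (-(μ * C₀)) * (Real.sin ψ * Real.cos ψ) + ((A₃ / 3) * C₀ ^ 3) * (Real.sin ψ ^ 3 * Real.cos ψ)) _ _ _),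
      intervalIntegral.integral_add (hc2.intervalIntegrable _ _) (hc3.intervalIntegrable _ _),
      intervalIntegral.integral_const_mul, intervalIntegral.integral_const_mul,
      intervalIntegral.integral_const_mul]
    have hsc : (∫ ψ in (0:ℝ)..(2 * π), Real.sin ψ * Real.cos ψ) = 0 := by
      rw [integral_sin_mul_cos₁]
      simp [Real.sin_two_pi]
    have hsc3 : (∫ ψ in (0:ℝ)..(2 * π), Real.sin ψ ^ 3 * Real.cos ψ) = 0 := by
      have h30 := integral_sin_pow_mul_cos_pow_odd (a := (0:ℝ)) (b := 2 * π) 3 0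
      simp [Real.sin_two_pi] at h30
      exact h30
    rw [hsc, hsc3, hJdef]
    ring
  have hgP : (∫ τ in (0:ℝ)..P, g τ) = ω⁻¹ * (-(2 * γ) * J) := by
    have := intervalIntegral.integral_comp_mul_left (a := (0:ℝ)) (b := P) (f := G) hω.ne'
    rw [hgdef]
    rw [this, mul_zero, hωP, smul_eq_mul, hGint]
  have hLeq : (∫ τ in (0:ℝ)..P, g τ) / P = L := by
    rw [hgP, hPdef, hLdef]
    field_simp
  obtain ⟨Mg, hMg⟩ := aux_periodic_dev g hgc P hP hper
  -- oscillatory part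
  set u : ℤ → ℝ → ℝ := fun i T => 2 * B i *
    ∫ τ in (0:ℝ)..T, Real.cos (ω * τ) * Real.sin ((i:ℝ) * n * τ - C₀ * Real.sin (ω * τ)) with hudef
  have hosc : ∀ i ∈ I₀, ∃ M : ℝ, ∀ T : ℝ, 0 ≤ T → |u i T| ≤ M := by
    intro i hi
    have h2 : Irrational (n / ω) := by
      have := hirr.inv
      rwa [inv_div] at this
    have h3 : Irrational ((i:ℝ) * n / ω) := by
      have := h2.intCast_mul (hI₀ i hi)
      rwa [mul_div_assoc]
    obtain ⟨M, hM⟩ := aux_osc_bound ω ((i:ℝ) * n) C₀ hω h3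
    refine ⟨|2 * B i| * M, fun T hT => ?_⟩
    rw [hudef]
    simp only []
    rw [abs_mul]
    have hM0 : 0 ≤ M := le_trans (abs_nonneg _) (hM 0 le_rfl)
    exact mul_le_mul le_rfl (hM T hT) (abs_nonneg _) (abs_nonneg _)
  obtain ⟨Mo, hMo⟩ := aux_finset_bound I₀ u hosc
  -- splitting the integral
  have hsplitF : ∀ T : ℝ,
      (∫ τ in (0:ℝ)..T, Real.cos (ω * τ) *
          (2 * ∑ i ∈ I₀, B i * Real.sin ((i : ℝ) * n * τ - C₀ * Real.sin (ω * τ))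
            - 2 * γ * Φ (C₀ * ω * Real.cos (ω * τ))
            - μ * C₀ * Real.sin (ω * τ)
            + (A₃ / 3) * C₀ ^ 3 * (Real.sin (ω * τ)) ^ 3))
      = (∑ i ∈ I₀, u i T) + ∫ τ in (0:ℝ)..T, g τ := by
    intro T
    have hci : ∀ i : ℤ, Continuous fun τ : ℝ =>
        2 * B i * (Real.cos (ω * τ) * Real.sin ((i:ℝ) * n * τ - C₀ * Real.sin (ω * τ))) := by
      intro i; fun_prop
    have hpt : ∀ τ : ℝ, Real.cos (ω * τ) *
          (2 * ∑ i ∈ I₀, B i * Real.sin ((i : ℝ) * n * τ - C₀ * Real.sin (ω * τ))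
            - 2 * γ * Φ (C₀ * ω * Real.cos (ω * τ))
            - μ * C₀ * Real.sin (ω * τ)
            + (A₃ / 3) * C₀ ^ 3 * (Real.sin (ω * τ)) ^ 3)
        = (∑ i ∈ I₀, 2 * B i *
            (Real.cos (ω * τ) * Real.sin ((i:ℝ) * n * τ - C₀ * Real.sin (ω * τ)))) + g τ := by
      intro τ
      rw [hgdef]
      simp only [hGdef]
      rw [show (∑ i ∈ I₀, 2 * B i *
            (Real.cos (ω * τ) * Real.sin ((i:ℝ) * n * τ - C₀ * Real.sin (ω * τ))))
          = 2 * Real.cos (ω * τ) *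
            ∑ i ∈ I₀, B i * Real.sin ((i:ℝ) * n * τ - C₀ * Real.sin (ω * τ)) from by
        rw [Finset.mul_sum]; exact Finset.sum_congr rfl fun i _ => by ring]
      ring
    rw [intervalIntegral.integral_congr (fun τ _ => hpt τ)]
    have hsumc : Continuous fun τ : ℝ => ∑ i ∈ I₀, 2 * B i *
        (Real.cos (ω * τ) * Real.sin ((i:ℝ) * n * τ - C₀ * Real.sin (ω * τ))) :=
      continuous_finset_sum I₀ fun i _ => hci i
    rw [intervalIntegral.integral_add (hsumc.intervalIntegrable _ _) (hgc.intervalIntegrable _ _),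
      intervalIntegral.integral_finset_sum (fun i (_ : i ∈ I₀) => (hci i).intervalIntegrable _ _)]
    congr 1
    refine Finset.sum_congr rfl fun i _ => ?_
    rw [hudef]
    simp only []
    rw [intervalIntegral.integral_const_mul]
  -- conclude
  apply aux_tendsto_of_dev _ L (Mo + Mg)
  intro T hT
  have hT0 : (0:ℝ) ≤ T := le_trans zero_le_one hT
  rw [hsplitF T]
  have h1 := hMo T hT0
  have h2 := hMg T
  rw [hLeq] at h2
  calc |(∑ i ∈ I₀, u i T) + (∫ τ in (0:ℝ)..T, g τ) - L * T|
      = |(∑ i ∈ I₀, u i T) + ((∫ τ in (0:ℝ)..T, g τ) - L * T)| := by rw [add_sub_assoc]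
    _ ≤ |∑ i ∈ I₀, u i T| + |(∫ τ in (0:ℝ)..T, g τ) - L * T| := abs_add_le _ _
    _ ≤ Mo + Mg := add_le_add h1 h2
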